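/- Let r, s, t be nonzero real numbers and set e := r + t − s, f := r + s − t, g := s + t − r, and D := −(e·f + f·g + g·e). If D > 0 and √D < |e|, √D < |f|, √D < |g|, then arsinh( (e/(r·t))·(√D/2) ) + arsinh( (f/(r·s))·(√D/2) ) + arsinh( (g/(s·t))·(√D/2) ) = 0, where arsinh is the inverse hyperbolic sine. (This is the D > 0, arcsinh part of the paper's Lemma on vertex identities in a topograph: r, s, t are the labels on the three regions adjacent to a vertex, e, f, g the labels on the three adjacent oriented edges, and D the discriminant.) -/

import Mathlib

set_option maxHeartbeats 1000000

theorem stmt_7 (r s t : ℝ) (hr : r ≠ 0) (hs : s ≠ 0) (ht : t ≠ 0)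
    (hD : 0 < -((r + t - s) * (r + s - t) + (r + s - t) * (s + t - r) +
      (s + t - r) * (r + t - s)))
    (h1 : Real.sqrt (-((r + t - s) * (r + s - t) + (r + s - t) * (s + t - r) +
      (s + t - r) * (r + t - s))) < |r + t - s|)
    (h2 : Real.sqrt (-((r + t - s) * (r + s - t) + (r + s - t) * (s + t - r) +
      (s + t - r) * (r + t - s))) < |r + s - t|)
    (h3 : Real.sqrt (-((r + t - s) * (r + s - t) + (r + s - t) * (s + t - r) +
      (s + t - r) * (r + t - s))) < |s + t - r|) :
    Real.arsinh (((r + t - s) / (r * t)) *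
        (Real.sqrt (-((r + t - s) * (r + s - t) + (r + s - t) * (s + t - r) +
          (s + t - r) * (r + t - s))) / 2)) +
      Real.arsinh (((r + s - t) / (r * s)) *
        (Real.sqrt (-((r + t - s) * (r + s - t) + (r + s - t) * (s + t - r) +
          (s + t - r) * (r + t - s))) / 2)) +
      Real.arsinh (((s + t - r) / (s * t)) *
        (Real.sqrt (-((r + t - s) * (r + s - t) + (r + s - t) * (s + t - r) +
          (s + t - r) * (r + t - s))) / 2)) = 0 := by
  set d := Real.sqrt (-((r + t - s) * (r + s - t) + (r + s - t) * (s + t - r) +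
      (s + t - r) * (r + t - s))) with hd
  have hd0 : 0 ≤ d := Real.sqrt_nonneg _
  have hd2 : d ^ 2 = -((r + t - s) * (r + s - t) + (r + s - t) * (s + t - r) +
      (s + t - r) * (r + t - s)) := Real.sq_sqrt hD.le
  have h1' : d ^ 2 < (r + t - s) ^ 2 := by
    calc d ^ 2 < |r + t - s| ^ 2 := by exact pow_lt_pow_left₀ h1 hd0 (by norm_num)
    _ = (r + t - s) ^ 2 := sq_abs _
  have h2' : d ^ 2 < (r + s - t) ^ 2 := by
    calc d ^ 2 < |r + s - t| ^ 2 := by exact pow_lt_pow_left₀ h2 hd0 (by norm_num)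
    _ = (r + s - t) ^ 2 := sq_abs _
  have h3' : d ^ 2 < (s + t - r) ^ 2 := by
    calc d ^ 2 < |s + t - r| ^ 2 := by exact pow_lt_pow_left₀ h3 hd0 (by norm_num)
    _ = (s + t - r) ^ 2 := sq_abs _
  have hrt : 0 < r * t := by nlinarith
  have hrs : 0 < r * s := by nlinarith
  have hst : 0 < s * t := by nlinarith
  have cx : Real.cosh (Real.arsinh ((r + t - s) / (r * t) * (d / 2))) =
      ((r + t - s) ^ 2 + d ^ 2) / (4 * (r * t)) := by
    rw [Real.cosh_arsinh]
    rw [show 1 + ((r + t - s) / (r * t) * (d / 2)) ^ 2 =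
        (((r + t - s) ^ 2 + d ^ 2) / (4 * (r * t))) ^ 2 from by
      field_simp
      linear_combination (8 * (r + t - s) ^ 2 - 4 * d ^ 2 - 4 * (-((r + t - s) * (r + s - t) + (r + s - t) * (s + t - r) + (s + t - r) * (r + t - s)))) * hd2]
    exact Real.sqrt_sq (by positivity)
  have cy : Real.cosh (Real.arsinh ((r + s - t) / (r * s) * (d / 2))) =
      ((r + s - t) ^ 2 + d ^ 2) / (4 * (r * s)) := by
    rw [Real.cosh_arsinh]
    rw [show 1 + ((r + s - t) / (r * s) * (d / 2)) ^ 2 =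
        (((r + s - t) ^ 2 + d ^ 2) / (4 * (r * s))) ^ 2 from by
      field_simp
      linear_combination (8 * (r + s - t) ^ 2 - 4 * d ^ 2 - 4 * (-((r + t - s) * (r + s - t) + (r + s - t) * (s + t - r) + (s + t - r) * (r + t - s)))) * hd2]
    exact Real.sqrt_sq (by positivity)
  have cz : Real.cosh (Real.arsinh ((s + t - r) / (s * t) * (d / 2))) =
      ((s + t - r) ^ 2 + d ^ 2) / (4 * (s * t)) := by
    rw [Real.cosh_arsinh]
    rw [show 1 + ((s + t - r) / (s * t) * (d / 2)) ^ 2 =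
        (((s + t - r) ^ 2 + d ^ 2) / (4 * (s * t))) ^ 2 from by
      field_simp
      linear_combination (8 * (s + t - r) ^ 2 - 4 * d ^ 2 - 4 * (-((r + t - s) * (r + s - t) + (r + s - t) * (s + t - r) + (s + t - r) * (r + t - s)))) * hd2]
    exact Real.sqrt_sq (by positivity)
  apply Real.sinh_injective
  rw [Real.sinh_zero, Real.sinh_add, Real.sinh_add, Real.cosh_add,
    Real.sinh_arsinh, Real.sinh_arsinh, Real.sinh_arsinh, cx, cy, cz]
  field_simp
  linear_combination (d * (4 * ((r + t - s) + (r + s - t) + (s + t - r)) * d ^ 2 + 4 * ((r + t - s) * (r + s - t) * ((r + t - s) + (r + s - t)) + ((r + t - s) + (r + s - t)) * (s + t - r) ^ 2 + (s + t - r) * ((r + t - s) + (r + s - t)) ^ 2 + 2 * (s + t - r) * (r + t - s) * (r + s - t)) + 4 * ((r + t - s) + (r + s - t) + (s + t - r)) * (-((r + t - s) * (r + s - t) + (r + s - t) * (s + t - r) + (s + t - r) * (r + t - s))))) * hd2
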